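/- Theorem 3 (root-mean-square bound on the computational error under a random round-off model). Fix p ≥ 0 and nodes 0 ≤ τ₀ < ⋯ < τ_p ≤ 1. There exists a constant C_p′, depending only on p and the nodes, with the following property. Let 0 = t₀ < ⋯ < t_M = T be a partition with Δt_m = t_m − t_{m−1}, let z : [0,T] → ℝ^N be continuous, let ε > 0, and on a probability space let (X_{mki})_{1≤m≤M, 0≤k≤p, 1≤i≤N} be pairwise independent random variables each taking the values +1 and −1 with probability 1/2 each. Define the random vectors R̄_k^m ∈ ℝ^N by (R̄_k^m)_i = ε X_{mki} and the random variable E_C = Σ_{m=1}^{M} Σ_{k=0}^{p} ⟨z(t_{m−1} + τ_k Δt_m), R̄_k^m⟩. Then E[E_C²] = ε² Σ_{m=1}^{M} Σ_{k=0}^{p} ‖z(t_{m−1} + τ_k Δt_m)‖², and consequently (E[E_C²])^{1/2} ≤ √(C_p′) · (ε / √(min_{1≤m≤M} Δt_m)) · (∫₀ᵀ ‖(πz)(t)‖² dt)^{1/2}. -/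

import Mathlib

open MeasureTheory
open scoped InnerProductSpace

open ProbabilityTheory
set_option linter.unusedSectionVars false
set_option linter.unusedVariables false

/-- The Lagrange nodal basis `{λ_k}` of polynomials of degree `≤ p` on `[0,1]`
associated with nodes `τ₀ < ⋯ < τ_p`, i.e. `λ_i(τ_j) = δ_{ij}`. -/
noncomputable def lagB (p : ℕ) (τ : Fin (p + 1) → ℝ) (k : Fin (p + 1)) (x : ℝ) : ℝ :=
  ∏ j ∈ Finset.univ.erase k, (x - τ j) / (τ k - τ j)

lemma lagB_continuous (p : ℕ) (τ : Fin (p + 1) → ℝ) (k : Fin (p + 1)) :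
    Continuous (lagB p τ k) := by
  unfold lagB
  exact continuous_finset_prod _ fun j _ => (continuous_id.sub continuous_const).div_const _

lemma lagB_node (p : ℕ) (τ : Fin (p + 1) → ℝ) (hτ : Function.Injective τ)
    (k j : Fin (p + 1)) : lagB p τ k (τ j) = if j = k then 1 else 0 := by
  unfold lagB
  rcases eq_or_ne j k with rfl | hjk
  · simp only [if_pos rfl]
    refine Finset.prod_eq_one fun i hi => ?_
    have : τ j - τ i ≠ 0 := sub_ne_zero.mpr fun h => (Finset.mem_erase.mp hi).1 (hτ h).symm
    field_simp
  · rw [if_neg hjk]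
    refine Finset.prod_eq_zero (Finset.mem_erase.mpr ⟨hjk, Finset.mem_univ j⟩) ?_
    simp

/-- Positive-definiteness of the Gram form of the Lagrange basis on `[0,1]`. -/
lemma gram_lower (p : ℕ) (τ : Fin (p + 1) → ℝ)
    (hτ : StrictMono τ) (hτ0 : 0 ≤ τ 0) (hτ1 : τ (Fin.last p) ≤ 1) :
    ∃ c > 0, ∀ v : EuclideanSpace ℝ (Fin (p + 1)),
      c * ∑ k, v k ^ 2 ≤ ∫ x in (0:ℝ)..1, (∑ k, v k * lagB p τ k x) ^ 2 := by
  have hτmem : ∀ j, τ j ∈ Set.Icc (0:ℝ) 1 := fun j =>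
    ⟨hτ0.trans (hτ.monotone (Fin.zero_le j)), (hτ.monotone (Fin.le_last j)).trans hτ1⟩
  set Q : EuclideanSpace ℝ (Fin (p + 1)) → ℝ :=
    fun v => ∫ x in (0:ℝ)..1, (∑ k, v k * lagB p τ k x) ^ 2 with hQdef
  -- continuity of the sum function in x
  have hfc : ∀ v : EuclideanSpace ℝ (Fin (p+1)),
      Continuous (fun x => ∑ k, v k * lagB p τ k x) := fun v =>
    continuous_finset_sum _ fun k _ => continuous_const.mul (lagB_continuous p τ k)
  -- bilinear expansion
  have hQ : ∀ v : EuclideanSpace ℝ (Fin (p+1)), Q v =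
      ∑ j, ∑ k, v j * v k * ∫ x in (0:ℝ)..1, lagB p τ j x * lagB p τ k x := by
    intro v
    have expand : ∀ x : ℝ, (∑ k, v k * lagB p τ k x) ^ 2
        = ∑ j, ∑ k, v j * v k * (lagB p τ j x * lagB p τ k x) := by
      intro x
      rw [sq, Finset.sum_mul_sum]
      exact Finset.sum_congr rfl fun j _ => Finset.sum_congr rfl fun k _ => by ring
    simp only [hQdef, expand]
    rw [intervalIntegral.integral_finset_sum]
    · refine Finset.sum_congr rfl fun j _ => ?_
      rw [intervalIntegral.integral_finset_sum]
      · exact Finset.sum_congr rfl fun k _ => intervalIntegral.integral_const_mul _ _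
      · intro k _
        exact (continuous_const.mul
          ((lagB_continuous p τ j).mul (lagB_continuous p τ k))).intervalIntegrable _ _
    · intro j _
      apply Continuous.intervalIntegrable
      exact continuous_finset_sum _ fun k _ => continuous_const.mul
        ((lagB_continuous p τ j).mul (lagB_continuous p τ k))
  have hQcont : Continuous Q := by
    simp only [funext hQ]
    fun_prop
  -- homogeneity
  have hQsmul : ∀ (a : ℝ) (v : EuclideanSpace ℝ (Fin (p+1))), Q (a • v) = a ^ 2 * Q v := by
    intro a v
    rw [hQ, hQ, Finset.mul_sum]
    refine Finset.sum_congr rfl fun j _ => ?_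
    rw [Finset.mul_sum]
    refine Finset.sum_congr rfl fun k _ => ?_
    have : (a • v) j = a * v j := rfl
    have h2 : (a • v) k = a * v k := rfl
    rw [this, h2]; ring
  -- positivity on nonzero vectors
  have hQpos : ∀ v : EuclideanSpace ℝ (Fin (p+1)), v ≠ 0 → 0 < Q v := by
    intro v hv
    set f : ℝ → ℝ := fun x => ∑ k, v k * lagB p τ k x with hfdef
    have hfcont : Continuous f := hfc v
    have hQnn : 0 ≤ Q v := by
      rw [hQdef]
      apply intervalIntegral.integral_nonneg (by norm_num)
      intro x _; positivity
    rcases hQnn.lt_or_eq with h | h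
    · exact h
    exfalso
    -- Q v = 0 ⇒ f ≡ 0 on [0,1] ⇒ v = 0
    have hint : ∫ x in Set.Icc (0:ℝ) 1, (f x)^2 = 0 := by
      have : Q v = ∫ x in Set.Ioc (0:ℝ) 1, (f x)^2 :=
        intervalIntegral.integral_of_le (by norm_num)
      rw [← Measure.restrict_congr_set Ioc_ae_eq_Icc, ← this, ← h]
    have hae : (fun x => (f x)^2) =ᶠ[ae (volume.restrict (Set.Icc (0:ℝ) 1))] 0 := by
      rw [← setIntegral_eq_zero_iff_of_nonneg_ae]
      · exact hint
      · filter_upwards with x; positivity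
      · exact ((hfcont.pow 2).continuousOn.integrableOn_compact isCompact_Icc)
    have heq : Set.EqOn (fun x => (f x)^2) 0 (Set.Icc (0:ℝ) 1) := by
      refine Measure.eqOn_of_ae_eq hae (hfcont.pow 2).continuousOn continuousOn_const ?_
      rw [interior_Icc, closure_Ioo (by norm_num : (0:ℝ) ≠ 1)]
    have hvz : v = 0 := by
      ext j
      have := heq (hτmem j)
      have hfj : f (τ j) = v j := by
        simp only [hfdef]
        rw [Finset.sum_congr rfl fun k _ => by rw [lagB_node p τ hτ.injective k j]]
        simp
      simp only [Pi.zero_apply, Pi.pow_apply] at this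
      have : (f (τ j))^2 = 0 := this
      rw [hfj] at this
      exact pow_eq_zero_iff (by norm_num) |>.mp this
    exact hv hvz
  -- minimum over the sphere
  obtain ⟨v0, hv0mem, hv0min⟩ := (isCompact_sphere (0 : EuclideanSpace ℝ (Fin (p+1))) 1).exists_isMinOn
    ⟨EuclideanSpace.single 0 1, by simp [EuclideanSpace.norm_single]⟩ hQcont.continuousOn
  have hv0norm : ‖v0‖ = 1 := by simpa using hv0mem
  have hv0ne : v0 ≠ 0 := fun h => by simp [h] at hv0norm
  refine ⟨Q v0, hQpos v0 hv0ne, fun v => ?_⟩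
  have hnormsq : ∀ w : EuclideanSpace ℝ (Fin (p+1)), ‖w‖^2 = ∑ k, w k ^2 := by
    intro w
    rw [EuclideanSpace.norm_eq, Real.sq_sqrt (by positivity)]
    simp [sq_abs]
  rcases eq_or_ne v 0 with rfl | hv
  · simp only [← hnormsq, norm_zero]
    norm_num
  · have hnv : (0:ℝ) < ‖v‖ := norm_pos_iff.mpr hv
    set u : EuclideanSpace ℝ (Fin (p+1)) := ‖v‖⁻¹ • v with hu
    have humem : u ∈ Metric.sphere (0 : EuclideanSpace ℝ (Fin (p+1))) 1 := by
      simp [hu, norm_smul, abs_of_pos (inv_pos.mpr hnv), inv_mul_cancel₀ hnv.ne']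
    have hQu : Q v0 ≤ Q u := hv0min humem
    have hvu : v = ‖v‖ • u := by
      rw [hu, smul_smul, mul_inv_cancel₀ hnv.ne', one_smul]
    calc Q v0 * ∑ k, v k ^2 = Q v0 * ‖v‖^2 := by rw [hnormsq]
      _ ≤ Q u * ‖v‖^2 := by nlinarith [sq_nonneg ‖v‖]
      _ = ‖v‖^2 * Q u := by ring
      _ = Q (‖v‖ • u) := (hQsmul ‖v‖ u).symm
      _ = Q v := by rw [← hvu]

/-- The degree-`p` Lagrange interpolant of `z` on the interval `[a, b]` at the
nodal points `a + τ_k (b − a)`. -/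
noncomputable def interpOn {N : ℕ} (p : ℕ) (τ : Fin (p + 1) → ℝ)
    (z : ℝ → EuclideanSpace ℝ (Fin N)) (a b s : ℝ) : EuclideanSpace ℝ (Fin N) :=
  ∑ k, lagB p τ k ((s - a) / (b - a)) • z (a + τ k * (b - a))

lemma interval_lower (p : ℕ) (τ : Fin (p + 1) → ℝ) {c : ℝ}
    (hgram : ∀ v : EuclideanSpace ℝ (Fin (p + 1)),
      c * ∑ k, v k ^ 2 ≤ ∫ x in (0:ℝ)..1, (∑ k, v k * lagB p τ k x) ^ 2)
    {N : ℕ} (z : ℝ → EuclideanSpace ℝ (Fin N)) (a b : ℝ) (hab : a < b) :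
    (b - a) * (c * ∑ k, ‖z (a + τ k * (b - a))‖ ^ 2)
      ≤ ∫ s in a..b, ‖interpOn p τ z a b s‖ ^ 2 := by
  have hba : b - a ≠ 0 := sub_ne_zero.mpr hab.ne'
  set w : Fin (p + 1) → EuclideanSpace ℝ (Fin N) := fun k => z (a + τ k * (b - a)) with hw
  set g : ℝ → ℝ := fun x => ‖∑ k, lagB p τ k x • w k‖ ^ 2 with hg
  -- change of variables
  have hcov : ∫ s in a..b, ‖interpOn p τ z a b s‖ ^ 2 = (b - a) * ∫ x in (0:ℝ)..1, g x := by
    have h1 : ∀ s : ℝ, ‖interpOn p τ z a b s‖ ^ 2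
        = g (-(a * (b - a)⁻¹) + (b - a)⁻¹ * s) := by
      intro s
      have : (s - a) / (b - a) = -(a * (b - a)⁻¹) + (b - a)⁻¹ * s := by
        field_simp; ring
      simp only [hg, interpOn, this, hw]
    simp only [h1]
    rw [intervalIntegral.integral_comp_add_mul g (inv_ne_zero hba)]
    have e1 : -(a * (b - a)⁻¹) + (b - a)⁻¹ * a = 0 := by field_simp; ring
    have e2 : -(a * (b - a)⁻¹) + (b - a)⁻¹ * b = 1 := by field_simp; ring
    rw [e1, e2, inv_inv, smul_eq_mul]
  rw [hcov]
  have hnormsq : ∀ u : EuclideanSpace ℝ (Fin N), ‖u‖ ^ 2 = ∑ i, u i ^ 2 := by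
    intro u
    rw [EuclideanSpace.norm_eq, Real.sq_sqrt (by positivity)]
    simp [sq_abs]
  have hgx : ∀ x : ℝ, g x = ∑ i, (∑ k, w k i * lagB p τ k x) ^ 2 := by
    intro x
    show ‖∑ k, lagB p τ k x • w k‖ ^ 2 = _
    rw [hnormsq]
    refine Finset.sum_congr rfl fun i _ => ?_
    congr 1
    rw [WithLp.ofLp_sum, Finset.sum_apply]
    exact Finset.sum_congr rfl fun k _ => by
      simp [PiLp.smul_apply, smul_eq_mul, mul_comm]
  have hint : ∫ x in (0:ℝ)..1, g x = ∑ i, ∫ x in (0:ℝ)..1, (∑ k, w k i * lagB p τ k x) ^ 2 := by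
    simp only [funext hgx]
    rw [intervalIntegral.integral_finset_sum]
    intro i _
    exact ((continuous_finset_sum _ fun k _ =>
      continuous_const.mul (lagB_continuous p τ k)).pow 2).intervalIntegrable _ _
  rw [hint]
  have hterm : ∀ i : Fin N, c * ∑ k, w k i ^ 2
      ≤ ∫ x in (0:ℝ)..1, (∑ k, w k i * lagB p τ k x) ^ 2 :=
    fun i => hgram (WithLp.toLp 2 (fun k => w k i))
  have : ∑ i : Fin N, c * ∑ k, w k i ^ 2
      ≤ ∑ i : Fin N, ∫ x in (0:ℝ)..1, (∑ k, w k i * lagB p τ k x) ^ 2 :=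
    Finset.sum_le_sum fun i _ => hterm i
  have hswap : ∑ i : Fin N, c * ∑ k, w k i ^ 2 = c * ∑ k, ‖w k‖ ^ 2 := by
    simp only [← Finset.mul_sum]
    congr 1
    rw [Finset.sum_comm]
    exact Finset.sum_congr rfl fun k _ => (hnormsq (w k)).symm
  nlinarith [this, hswap, sub_pos.mpr hab]


section signs
variable {Ω : Type} [MeasurableSpace Ω] {P : Measure Ω} [IsProbabilityMeasure P]
  {X Y : Ω → ℝ}

lemma sign_ae (hX : Measurable X) (h1 : P {ω | X ω = 1} = 1/2)
    (h2 : P {ω | X ω = -1} = 1/2) : ∀ᵐ ω ∂P, X ω = 1 ∨ X ω = -1 := by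
  have hA : MeasurableSet {ω | X ω = 1} := hX (measurableSet_singleton 1)
  have hB : MeasurableSet {ω | X ω = -1} := hX (measurableSet_singleton (-1))
  have hd : Disjoint {ω | X ω = 1} {ω | X ω = -1} := by
    rw [Set.disjoint_left]; rintro ω (h : X ω = 1) (h' : X ω = -1); norm_num [h] at h'
  have hu : P ({ω | X ω = 1} ∪ {ω | X ω = -1}) = 1 := by
    rw [measure_union hd hB, h1, h2, ENNReal.div_add_div_same,
      one_add_one_eq_two,
      ENNReal.div_self two_ne_zero ENNReal.ofNat_ne_top]
  have hc : P ({ω | X ω = 1} ∪ {ω | X ω = -1})ᶜ = 0 := by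
    rw [measure_compl (hA.union hB) (measure_ne_top _ _), hu, measure_univ]; simp
  filter_upwards [measure_eq_zero_iff_ae_notMem.mp hc] with ω hω
  simpa [Set.mem_union] using not_not.mp hω

lemma sign_bound_ae (h : ∀ᵐ ω ∂P, X ω = 1 ∨ X ω = -1) : ∀ᵐ ω ∂P, ‖X ω‖ ≤ 1 := by
  filter_upwards [h] with ω hω; rcases hω with h | h <;> simp [h]

lemma sign_integrable (hX : Measurable X) (h : ∀ᵐ ω ∂P, X ω = 1 ∨ X ω = -1) :
    Integrable X P :=
  (integrable_const 1).mono' hX.aestronglyMeasurable (sign_bound_ae h)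

lemma sign_mul_integrable (hX : Measurable X) (hY : Measurable Y)
    (h : ∀ᵐ ω ∂P, X ω = 1 ∨ X ω = -1) (h' : ∀ᵐ ω ∂P, Y ω = 1 ∨ Y ω = -1) :
    Integrable (fun ω => X ω * Y ω) P := by
  refine (integrable_const 1).mono' (hX.mul hY).aestronglyMeasurable ?_
  filter_upwards [h, h'] with ω h1 h2
  rcases h1 with h1 | h1 <;> rcases h2 with h2 | h2 <;> simp [h1, h2]

lemma sign_integral_sq (hX : Measurable X) (h : ∀ᵐ ω ∂P, X ω = 1 ∨ X ω = -1) :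
    ∫ ω, X ω * X ω ∂P = 1 := by
  have : ∫ ω, X ω * X ω ∂P = ∫ _ω, (1:ℝ) ∂P := by
    refine integral_congr_ae ?_
    filter_upwards [h] with ω hω; rcases hω with h | h <;> simp [h]
  rw [this]; simp

lemma sign_integral (hX : Measurable X) (h1 : P {ω | X ω = 1} = 1/2)
    (h2 : P {ω | X ω = -1} = 1/2) : ∫ ω, X ω ∂P = 0 := by
  have hA : MeasurableSet {ω | X ω = 1} := hX (measurableSet_singleton 1)
  have hB : MeasurableSet {ω | X ω = -1} := hX (measurableSet_singleton (-1))
  have key : ∫ ω, X ω ∂P =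
      ∫ ω, ({ω | X ω = 1}.indicator (fun _ => (1:ℝ)) ω
        - {ω | X ω = -1}.indicator (fun _ => (1:ℝ)) ω) ∂P := by
    refine integral_congr_ae ?_
    filter_upwards [sign_ae hX h1 h2] with ω hω
    rcases hω with h | h
    · have : ω ∉ {ω | X ω = -1} := by simp only [Set.mem_setOf_eq, h]; norm_num
      simp [Set.indicator_of_mem (show ω ∈ {ω | X ω = 1} from h),
        Set.indicator_of_notMem this, h]
    · have : ω ∉ {ω | X ω = 1} := by simp only [Set.mem_setOf_eq, h]; norm_num
      simp [Set.indicator_of_mem (show ω ∈ {ω | X ω = -1} from h),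
        Set.indicator_of_notMem this, h]
  rw [key, integral_sub ((integrable_const 1).indicator hA)
    ((integrable_const 1).indicator hB)]
  rw [integral_indicator_const _ hA, integral_indicator_const _ hB, measureReal_def, measureReal_def, h1, h2]
  simp

lemma sign_integral_mul (hXY : IndepFun X Y P) (hX : Measurable X) (hY : Measurable Y)
    (h1 : P {ω | X ω = 1} = 1/2) (h2 : P {ω | X ω = -1} = 1/2)
    (h1' : P {ω | Y ω = 1} = 1/2) (h2' : P {ω | Y ω = -1} = 1/2) :
    ∫ ω, X ω * Y ω ∂P = 0 := by
  have := hXY.integral_mul_eq_mul_integral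
    (sign_integrable hX (sign_ae hX h1 h2)).aestronglyMeasurable (sign_integrable hY (sign_ae hY h1' h2')).aestronglyMeasurable
  simpa [Pi.mul_def, sign_integral hX h1 h2] using this
end signs

/-- **Theorem 3 (root-mean-square bound on the computational error under a random
round-off model).** If the components of the discrete residuals are pairwise independent
random signs scaled by `ε`, i.e. `(R̄_k^m)_i = ε X_{mki}` with `X_{mki} = ±1` with
probability `1/2` each, then for `E_C = Σ_m Σ_k ⟨z(t_{m−1} + τ_k Δt_m), R̄_k^m⟩` one has
`E[E_C²] = ε² Σ_m Σ_k ‖z(t_{m−1} + τ_k Δt_m)‖²` and consequently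
`(E[E_C²])^{1/2} ≤ √C_p' · (ε / √(min_m Δt_m)) · (∫₀ᵀ ‖πz‖² dt)^{1/2}`. -/
theorem rms_computational_error_bound (p : ℕ) (τ : Fin (p + 1) → ℝ)
    (hτ : StrictMono τ) (hτ0 : 0 ≤ τ 0) (hτ1 : τ (Fin.last p) ≤ 1) :
    ∃ Cp' : ℝ,
      ∀ (N M : ℕ) (hM : 0 < M) (T : ℝ)
        (t : ℕ → ℝ) (_ht0 : t 0 = 0) (_htM : t M = T)
        (_htlt : ∀ m < M, t m < t (m + 1))
        (z : ℝ → EuclideanSpace ℝ (Fin N)) (_hz : ContinuousOn z (Set.Icc 0 T))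
        (ε : ℝ) (_hε : 0 < ε)
        (Ω : Type) (_mΩ : MeasurableSpace Ω) (P : Measure Ω)
        (_hP : IsProbabilityMeasure P)
        (X : ℕ → Fin (p + 1) → Fin N → Ω → ℝ)
        (_hmeas : ∀ m k i, Measurable (X m k i))
        (_hdist : ∀ m < M, ∀ (k : Fin (p + 1)) (i : Fin N),
          P {ω | X m k i ω = 1} = 1 / 2 ∧ P {ω | X m k i ω = -1} = 1 / 2)
        (_hindep : ∀ (m m' : ℕ) (k k' : Fin (p + 1)) (i i' : Fin N),
          m < M → m' < M → (m, k, i) ≠ (m', k', i') →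
          ProbabilityTheory.IndepFun (X m k i) (X m' k' i') P),
        let Rbar : ℕ → Fin (p + 1) → Ω → EuclideanSpace ℝ (Fin N) :=
          fun m k ω => (WithLp.toLp 2 (fun i => ε * X m k i ω) : EuclideanSpace ℝ (Fin N))
        let EC : Ω → ℝ := fun ω => ∑ m ∈ Finset.range M,
          ∑ k, ⟪z (t m + τ k * (t (m + 1) - t m)), Rbar m k ω⟫_ℝ
        (∫ ω, EC ω ^ 2 ∂P
            = ε ^ 2 * ∑ m ∈ Finset.range M,
                ∑ k : Fin (p + 1), ‖z (t m + τ k * (t (m + 1) - t m))‖ ^ 2)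
        ∧ Real.sqrt (∫ ω, EC ω ^ 2 ∂P)
            ≤ Real.sqrt Cp'
              * (ε / Real.sqrt ((Finset.range M).inf'
                    (Finset.nonempty_range_iff.mpr hM.ne') fun m => t (m + 1) - t m))
              * Real.sqrt (∑ m ∈ Finset.range M,
                  ∫ s in t m..t (m + 1), ‖interpOn p τ z (t m) (t (m + 1)) s‖ ^ 2) := by
  obtain ⟨c, hc, hgram⟩ := gram_lower p τ hτ hτ0 hτ1
  refine ⟨c⁻¹, ?_⟩
  intro N M hM T t ht0 htM htlt z hz ε hε Ω mΩ P hP X hmeas hdist hindep Rbar EC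
  have hnormsq : ∀ u : EuclideanSpace ℝ (Fin N), ‖u‖ ^ 2 = ∑ i, u i ^ 2 := by
    intro u
    rw [EuclideanSpace.norm_eq, Real.sq_sqrt (by positivity)]
    simp [sq_abs]
  set w : ℕ → Fin (p + 1) → EuclideanSpace ℝ (Fin N) :=
    fun m k => z (t m + τ k * (t (m + 1) - t m)) with hw
  set s : Finset (ℕ × Fin (p + 1) × Fin N) :=
    Finset.range M ×ˢ (Finset.univ : Finset (Fin (p + 1) × Fin N)) with hs
  set a : ℕ × Fin (p + 1) × Fin N → ℝ := fun q => w q.1 q.2.1 q.2.2 with ha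
  set Y : ℕ × Fin (p + 1) × Fin N → Ω → ℝ := fun q => X q.1 q.2.1 q.2.2 with hY
  have hqlt : ∀ q ∈ s, q.1 < M := fun q hq =>
    Finset.mem_range.mp (Finset.mem_product.mp hq).1
  have hsign : ∀ q ∈ s, ∀ᵐ ω ∂P, Y q ω = 1 ∨ Y q ω = -1 := fun q hq =>
    sign_ae (hmeas _ _ _) (hdist q.1 (hqlt q hq) q.2.1 q.2.2).1
      (hdist q.1 (hqlt q hq) q.2.1 q.2.2).2
  have hECform : ∀ ω, EC ω = ε * ∑ q ∈ s, a q * Y q ω := by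
    intro ω
    show (∑ m ∈ Finset.range M, ∑ k, ⟪w m k, Rbar m k ω⟫_ℝ) = _
    rw [hs, Finset.mul_sum, Finset.sum_product]
    refine Finset.sum_congr rfl fun m _ => ?_
    rw [Fintype.sum_prod_type]
    refine Finset.sum_congr rfl fun k _ => ?_
    rw [PiLp.inner_apply]
    refine Finset.sum_congr rfl fun i _ => ?_
    have : Rbar m k ω i = ε * X m k i ω := rfl
    simp only [RCLike.inner_apply, starRingEnd_apply, star_trivial, this, ha, hY]
    ring
  -- the integral identity
  have key : ∫ ω, EC ω ^ 2 ∂P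
      = ε ^ 2 * ∑ m ∈ Finset.range M, ∑ k : Fin (p + 1), ‖w m k‖ ^ 2 := by
    have hsq : ∀ ω, EC ω ^ 2
        = ∑ q ∈ s, ∑ r ∈ s, ε ^ 2 * (a q * a r) * (Y q ω * Y r ω) := by
      intro ω
      rw [hECform, mul_pow, sq (∑ q ∈ s, a q * Y q ω), Finset.sum_mul_sum, Finset.mul_sum]
      refine Finset.sum_congr rfl fun q _ => ?_
      rw [Finset.mul_sum]
      exact Finset.sum_congr rfl fun r _ => by ring
    have hint : ∀ q ∈ s, ∀ r ∈ s,
        Integrable (fun ω => ε ^ 2 * (a q * a r) * (Y q ω * Y r ω)) P :=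
      fun q hq r hr => (sign_mul_integrable (hmeas _ _ _) (hmeas _ _ _)
        (hsign q hq) (hsign r hr)).const_mul _
    have hval : ∀ q ∈ s, ∀ r ∈ s,
        ∫ ω, ε ^ 2 * (a q * a r) * (Y q ω * Y r ω) ∂P
          = if q = r then ε ^ 2 * a q ^ 2 else 0 := by
      intro q hq r hr
      rw [integral_const_mul]
      rcases eq_or_ne q r with rfl | hqr
      · rw [sign_integral_sq (hmeas _ _ _) (hsign q hq), if_pos rfl]; ring
      · rw [if_neg hqr]
        obtain ⟨m, k, i⟩ := q
        obtain ⟨m', k', i'⟩ := r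
        have hind : IndepFun (X m k i) (X m' k' i') P :=
          hindep m m' k k' i i' (hqlt _ hq) (hqlt _ hr) (by simpa using hqr)
        rw [sign_integral_mul hind (hmeas _ _ _) (hmeas _ _ _)
          (hdist m (hqlt _ hq) k i).1 (hdist m (hqlt _ hq) k i).2
          (hdist m' (hqlt _ hr) k' i').1 (hdist m' (hqlt _ hr) k' i').2]
        ring
    calc ∫ ω, EC ω ^ 2 ∂P
        = ∫ ω, ∑ q ∈ s, ∑ r ∈ s, ε ^ 2 * (a q * a r) * (Y q ω * Y r ω) ∂P := by
          exact integral_congr_ae (Filter.Eventually.of_forall fun ω => hsq ω)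
      _ = ∑ q ∈ s, ∑ r ∈ s, ∫ ω, ε ^ 2 * (a q * a r) * (Y q ω * Y r ω) ∂P := by
          rw [integral_finset_sum s (fun q hq => integrable_finset_sum s (hint q hq))]
          exact Finset.sum_congr rfl fun q hq =>
            integral_finset_sum s (fun r hr => hint q hq r hr)
      _ = ∑ q ∈ s, ∑ r ∈ s, (if q = r then ε ^ 2 * a q ^ 2 else 0) :=
          Finset.sum_congr rfl fun q hq => Finset.sum_congr rfl fun r hr => hval q hq r hr
      _ = ∑ q ∈ s, ε ^ 2 * a q ^ 2 := by
          refine Finset.sum_congr rfl fun q hq => ?_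
          rw [Finset.sum_ite_eq s q (fun _ => ε ^ 2 * a q ^ 2), if_pos hq]
      _ = ε ^ 2 * ∑ m ∈ Finset.range M, ∑ k : Fin (p + 1), ‖w m k‖ ^ 2 := by
          rw [← Finset.mul_sum]
          congr 1
          rw [hs, Finset.sum_product]
          refine Finset.sum_congr rfl fun m _ => ?_
          rw [Fintype.sum_prod_type]
          refine Finset.sum_congr rfl fun k _ => ?_
          rw [hnormsq]
  refine ⟨key, ?_⟩
  -- the inequality
  set δ := (Finset.range M).inf' (Finset.nonempty_range_iff.mpr hM.ne')
    (fun m => t (m + 1) - t m) with hδ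
  have hδpos : 0 < δ :=
    Finset.lt_inf'_iff _ |>.mpr fun m hm => sub_pos.mpr (htlt m (Finset.mem_range.mp hm))
  have hδle : ∀ m ∈ Finset.range M, δ ≤ t (m + 1) - t m := fun m hm =>
    Finset.inf'_le _ hm
  set S := ∑ m ∈ Finset.range M, ∑ k : Fin (p + 1), ‖w m k‖ ^ 2 with hS
  have hSnn : 0 ≤ S := Finset.sum_nonneg fun m _ => Finset.sum_nonneg fun k _ => sq_nonneg _
  set I := ∑ m ∈ Finset.range M,
    ∫ x in t m..t (m + 1), ‖interpOn p τ z (t m) (t (m + 1)) x‖ ^ 2 with hI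
  have hIlow : δ * (c * S) ≤ I := by
    rw [hS, hI, Finset.mul_sum, Finset.mul_sum]
    refine Finset.sum_le_sum fun m hm => ?_
    have h1 := interval_lower p τ hgram z (t m) (t (m + 1)) (htlt m (Finset.mem_range.mp hm))
    have h2 : δ * (c * ∑ k, ‖w m k‖ ^ 2) ≤ (t (m + 1) - t m) * (c * ∑ k, ‖w m k‖ ^ 2) := by
      have : 0 ≤ c * ∑ k, ‖w m k‖ ^ 2 :=
        mul_nonneg hc.le (Finset.sum_nonneg fun k _ => sq_nonneg _)
      exact mul_le_mul_of_nonneg_right (hδle m hm) this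
    calc δ * (c * ∑ k : Fin (p+1), ‖w m k‖ ^ 2)
        ≤ (t (m + 1) - t m) * (c * ∑ k, ‖w m k‖ ^ 2) := h2
      _ ≤ _ := h1
  rw [key]
  have hsqrtc : (0:ℝ) < Real.sqrt c := Real.sqrt_pos.mpr hc
  have hsqrtδ : (0:ℝ) < Real.sqrt δ := Real.sqrt_pos.mpr hδpos
  calc Real.sqrt (ε ^ 2 * S) = ε * Real.sqrt S := by
        rw [Real.sqrt_mul (sq_nonneg ε), Real.sqrt_sq hε.le]
    _ = Real.sqrt c⁻¹ * (ε / Real.sqrt δ) * Real.sqrt (δ * (c * S)) := by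
        rw [Real.sqrt_mul hδpos.le, Real.sqrt_mul hc.le, Real.sqrt_inv]
        field_simp
    _ ≤ Real.sqrt c⁻¹ * (ε / Real.sqrt δ) * Real.sqrt I := by
        have hmul : 0 ≤ Real.sqrt c⁻¹ * (ε / Real.sqrt δ) :=
          mul_nonneg (Real.sqrt_nonneg _) (div_nonneg hε.le (Real.sqrt_nonneg _))
        exact mul_le_mul_of_nonneg_left (Real.sqrt_le_sqrt hIlow) hmul
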